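/- 𝒢 is δ_s-acyclic if and only if N_opt^q(δ_s,𝒢) = n. -/

import Mathlib

open Finset

/-- Restriction of a vector to the coordinates in a finite index set. -/
def proj {ι 𝔽 : Type*} (A : Finset ι) (x : ι → 𝔽) : {a // a ∈ A} → 𝔽 :=
  fun a => x a.1

/-- `enc` is a valid (δ,𝒢)-ICSIE encoding: decoders exist recovering the wanted
messages from the codeword and side information with at most `δ r` errors. -/
def ValidEnc (𝔽 : Type*) [DecidableEq 𝔽] {ι R C : Type*}
    (X f : R → Finset ι) (δ : R → ℕ) (enc : (ι → 𝔽) → C) : Prop :=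
  ∃ D : (r : R) → C → ({a // a ∈ X r} → 𝔽) → ({a // a ∈ f r} → 𝔽),
    ∀ (r : R) (x : ι → 𝔽) (xt : {a // a ∈ X r} → 𝔽),
      hammingDist (proj (X r) x) xt ≤ δ r → D r (enc x) xt = proj (f r) x

/-- Optimal codelength of a (δ,𝒢)-ICSIE. -/
noncomputable def Nopt (𝔽 : Type*) [DecidableEq 𝔽] {ι R : Type*}
    (X f : R → Finset ι) (δ : R → ℕ) : ℕ :=
  sInf {N | ∃ enc : (ι → 𝔽) → (Fin N → 𝔽), ValidEnc 𝔽 X f δ enc}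

/-- The family Φ: subsets `B` such that every receiver wanting a message of `B`
has at least `2δ+1` side information symbols inside `B`. -/
def Phi {ι R : Type*} [DecidableEq ι] (X f : R → Finset ι) (δ : R → ℕ) :
    Set (Finset ι) :=
  {B | ∀ r : R, (f r ∩ B).Nonempty → 2 * δ r + 1 ≤ (X r ∩ B).card}

/-- 𝒢 is δ_s-acyclic: no nonempty subset of the message index set is a δ_s-cycle. -/
def DeltaAcyclic {ι R : Type*} [DecidableEq ι] (X f : R → Finset ι) (δ : R → ℕ) : Prop :=
  ∀ B : Finset ι, B.Nonempty → B ∉ Phi X f δ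

open scoped Classical in
/-- Majority-style decoder: the unique value attained at least `s.card - δ` times. -/
noncomputable def maj {ι 𝔽 : Type*} [DecidableEq ι] [DecidableEq 𝔽] [Zero 𝔽]
    (s : Finset ι) (c : ι → 𝔽) (δ : ℕ) : 𝔽 :=
  if h : ∃ v, s.card - δ ≤ (s.filter (fun j => c j = v)).card then h.choose else 0

lemma maj_eq {ι 𝔽 : Type*} [DecidableEq ι] [DecidableEq 𝔽] [Zero 𝔽]
    {s : Finset ι} {c : ι → 𝔽} {δ : ℕ} {v : 𝔽} (hcard : 2 * δ + 1 ≤ s.card)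
    (hv : (s.filter (fun j => c j ≠ v)).card ≤ δ) : maj s c δ = v := by
  have hpart := Finset.card_filter_add_card_filter_not (s := s) (p := fun j => c j = v)
  have hv2 : (s.filter (fun a => ¬ c a = v)).card ≤ δ := hv
  have hex : ∃ w, s.card - δ ≤ (s.filter (fun j => c j = w)).card := ⟨v, by omega⟩
  rw [maj, dif_pos hex]
  by_contra hne
  have hsub : s.filter (fun j => c j = hex.choose) ⊆ s.filter (fun j => c j ≠ v) := by
    intro j hj
    simp only [mem_filter] at hj ⊢
    exact ⟨hj.1, by rw [hj.2]; exact hne⟩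
  have h1 : (s.filter (fun j => c j = hex.choose)).card ≤ (s.filter (fun a => ¬ c a = v)).card :=
    Finset.card_le_card hsub
  have h2 := hex.choose_spec
  omega

/-- 𝒢 is δ_s-acyclic iff the optimal ICSIE codelength equals `n`. -/
theorem deltaAcyclic_iff_Nopt_eq
    {𝔽 : Type*} [Field 𝔽] [Fintype 𝔽] [DecidableEq 𝔽]
    {n m : ℕ} (X f : Fin m → Finset (Fin n)) (δ : Fin m → ℕ)
    (hdisj : ∀ i, Disjoint (f i) (X i)) :
    DeltaAcyclic X f δ ↔ Nopt 𝔽 X f δ = n := by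
  constructor
  · intro hac
    have hnS : n ∈ {N | ∃ enc : (Fin n → 𝔽) → (Fin N → 𝔽), ValidEnc 𝔽 X f δ enc} := by
      refine ⟨fun x i => x i, fun r c xt => proj (f r) c, ?_⟩
      intro r x xt _
      rfl
    have hlb : ∀ N ∈ {N | ∃ enc : (Fin n → 𝔽) → (Fin N → 𝔽), ValidEnc 𝔽 X f δ enc}, n ≤ N := by
      intro N hN
      obtain ⟨enc, D, hD⟩ := hN
      have hinj : Function.Injective enc := by
        intro x y hxy
        by_contra hne
        set B : Finset (Fin n) := Finset.univ.filter (fun i => x i ≠ y i) with hBdef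
        have hBne : B.Nonempty := by
          obtain ⟨i, hi⟩ := Function.ne_iff.1 hne
          exact ⟨i, mem_filter.2 ⟨mem_univ _, hi⟩⟩
        have hB := hac B hBne
        simp only [Phi, Set.mem_setOf_eq, not_forall, not_le] at hB
        obtain ⟨r, hrne, hrlt⟩ := hB
        set S : Finset (Fin n) := X r ∩ B with hSdef
        have hSle : S.card ≤ 2 * δ r := by omega
        obtain ⟨T, hTsub, hTcard⟩ := S.exists_subset_card_eq (n := min (δ r) S.card) (min_le_right _ _)
        set xt : {a // a ∈ X r} → 𝔽 := fun a => if a.1 ∈ T then y a.1 else x a.1 with hxt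
        have h1 : hammingDist (proj (X r) x) xt ≤ δ r := by
          have heq : hammingDist (proj (X r) x) xt
              = (Finset.univ.filter (fun a : {a // a ∈ X r} => proj (X r) x a ≠ xt a)).card := rfl
          rw [heq]
          refine le_trans (Finset.card_le_card_of_injOn Subtype.val (t := T) ?_ ?_) ?_
          · intro a ha
            simp only [mem_coe, mem_filter, mem_univ, true_and] at ha
            by_contra hnT
            apply ha
            simp [xt, proj, show a.1 ∉ T from hnT]
          · intro a _ c _ hac'
            exact Subtype.ext hac'
          · omega
        have h2 : hammingDist (proj (X r) y) xt ≤ δ r := by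
          have heq : hammingDist (proj (X r) y) xt
              = (Finset.univ.filter (fun a : {a // a ∈ X r} => proj (X r) y a ≠ xt a)).card := rfl
          rw [heq]
          refine le_trans (Finset.card_le_card_of_injOn Subtype.val (t := S \ T) ?_ ?_) ?_
          · intro a ha
            simp only [mem_coe, mem_filter, mem_univ, true_and] at ha
            have hnT : a.1 ∉ T := by
              intro hT
              apply ha
              simp [xt, proj, hT]
            have hxy' : x a.1 ≠ y a.1 := by
              intro hxy''
              apply ha
              simp [xt, proj, hnT, hxy'']
            refine mem_sdiff.2 ⟨mem_inter.2 ⟨a.2, mem_filter.2 ⟨mem_univ _, hxy'⟩⟩, hnT⟩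
          · intro a _ c _ hac'
            exact Subtype.ext hac'
          · rw [card_sdiff_of_subset hTsub]
            omega
        have e1 := hD r x xt h1
        have e2 := hD r y xt h2
        rw [hxy, e2] at e1
        obtain ⟨w, hw⟩ := hrne
        have hwf : w ∈ f r := (mem_inter.1 hw).1
        have hwB : w ∈ B := (mem_inter.1 hw).2
        have hweq : proj (f r) x ⟨w, hwf⟩ = proj (f r) y ⟨w, hwf⟩ := by rw [e1]
        exact (mem_filter.1 hwB).2 hweq
      have hcard := Fintype.card_le_of_injective enc hinj
      have hq : 1 < Fintype.card 𝔽 := Fintype.one_lt_card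
      rw [Fintype.card_fun, Fintype.card_fun, Fintype.card_fin, Fintype.card_fin] at hcard
      exact (Nat.pow_le_pow_iff_right hq).1 hcard
    exact le_antisymm (Nat.sInf_le hnS) (le_csInf ⟨n, hnS⟩ hlb)
  · intro h
    by_contra hnac
    simp only [DeltaAcyclic, not_forall, not_not] at hnac
    obtain ⟨B, hBne, hBPhi⟩ := hnac
    obtain ⟨b, hb⟩ := hBne
    have hn1 : 1 ≤ n := b.pos
    have hcard : Fintype.card {j : Fin n // j ≠ b} = n - 1 := by
      simp [Fintype.card_subtype_compl]
    let e : {j : Fin n // j ≠ b} ≃ Fin (n - 1) := Fintype.equivFinOfCardEq hcard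
    let dec : (Fin (n - 1) → 𝔽) → Fin n → 𝔽 :=
      fun cw j => if hj : j = b then 0 else cw (e ⟨j, hj⟩)
    let enc : (Fin n → 𝔽) → Fin (n - 1) → 𝔽 := fun x k =>
      if (e.symm k).1 ∈ B then x (e.symm k).1 - x b else x (e.symm k).1
    have hdec : ∀ (x : Fin n → 𝔽) (j : Fin n),
        dec (enc x) j = if j ∈ B then x j - x b else x j := by
      intro x j
      by_cases hj : j = b
      · subst hj
        simp [dec, hb]
      · simp only [dec, dif_neg hj, enc, Equiv.symm_apply_apply]
    have hvalid : n - 1 ∈ {N | ∃ enc : (Fin n → 𝔽) → (Fin N → 𝔽), ValidEnc 𝔽 X f δ enc} := by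
      let D : (r : Fin m) → (Fin (n - 1) → 𝔽) → ({a // a ∈ X r} → 𝔽) → ({a // a ∈ f r} → 𝔽) :=
        fun r cw xt w =>
          if w.1 ∈ B then
            dec cw w.1 + maj (X r ∩ B)
              (fun j => (if hj : j ∈ X r then xt ⟨j, hj⟩ else 0) - dec cw j) (δ r)
          else dec cw w.1
      refine ⟨enc, D, ?_⟩
      intro r x xt hdist
      funext w
      simp only [D]
      by_cases hwB : w.1 ∈ B
      · rw [if_pos hwB]
        have hfB : (f r ∩ B).Nonempty := ⟨w.1, mem_inter.2 ⟨w.2, hwB⟩⟩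
        have hXB := hBPhi r hfB
        have hmaj : maj (X r ∩ B)
            (fun j => (if hj : j ∈ X r then xt ⟨j, hj⟩ else 0) - dec (enc x) j) (δ r) = x b := by
          apply maj_eq hXB
          refine le_trans (Finset.card_le_card_of_surjOn Subtype.val ?_) hdist
          intro j hj
          simp only [mem_coe, mem_filter, mem_inter] at hj
          obtain ⟨⟨hjX, hjB⟩, hjc⟩ := hj
          refine ⟨⟨j, hjX⟩, ?_, rfl⟩
          simp only [Set.mem_setOf_eq, mem_coe, mem_filter, mem_univ, true_and]
          intro hcontra
          apply hjc
          rw [dif_pos hjX, hdec, if_pos hjB]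
          have : xt ⟨j, hjX⟩ = x j := hcontra.symm
          rw [this]
          ring
        rw [hmaj, hdec, if_pos hwB]
        simp [proj]
      · rw [if_neg hwB, hdec, if_neg hwB]
        rfl
    have hle := Nat.sInf_le hvalid
    rw [Nopt] at h
    omega
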